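/- Let R be a finite commutative local ring of characteristic dividing n, with maximal ideal 𝔪, and let ψ : R → ℤ/n be a ℤ/n-linear functional whose kernel contains no nonzero ideal. Then Σ_{a ∈ R×} ζ_n^{ψ(a)} equals 0 if 𝔪 ≠ 0 (R not a field) and equals −1 if R is a field, where ζ_n is a primitive n-th root of unity in ℂ. -/

import Mathlib

/-- Let `R` be a finite local commutative symmetric `ℤ/n`-algebra with non-degenerate
functional `ψ`, and `ζ` a primitive `n`-th root of unity in `ℂ`. Then
`Σ_{a ∈ Rˣ} ζ^{ψ(a)}` is `0` if `R` is not a field and `-1` if `R` is a field. -/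
theorem stmt_15 {n : ℕ} {R : Type*} [CommRing R] [Finite R] [IsLocalRing R]
    [Algebra (ZMod n) R] [Fintype Rˣ]
    (ψ : R →ₗ[ZMod n] ZMod n)
    (hψ : ∀ I : Ideal R, (∀ a ∈ I, ψ a = 0) → I = ⊥)
    (ζ : ℂ) (hζ : IsPrimitiveRoot ζ n) :
    (¬ IsField R → (∑ a : Rˣ, ζ ^ (ψ (a : R)).val) = 0) ∧
      (IsField R → (∑ a : Rˣ, ζ ^ (ψ (a : R)).val) = -1) := by
  classical
  haveI : Fintype R := Fintype.ofFinite R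
  -- `n ≠ 0`
  have hn : n ≠ 0 := by
    rintro rfl
    have hz : ∀ a : R, ψ a = 0 := by
      intro a
      have h1 : (Fintype.card R) • a = 0 := card_nsmul_eq_zero
      have h2 : (Fintype.card R) • ψ a = 0 := by
        rw [← map_nsmul ψ, h1, map_zero]
      have h2' : (Fintype.card R) • (show ℤ from ψ a) = 0 := h2
      have h3 : ((Fintype.card R : ℤ)) * (show ℤ from ψ a) = 0 := by
        rw [← nsmul_eq_mul]; exact h2'
      rcases mul_eq_zero.mp h3 with h | h
      · exact absurd (Int.natCast_eq_zero.mp h) Fintype.card_ne_zero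
      · exact h
    have : (⊤ : Ideal R) = ⊥ := hψ ⊤ (fun a _ => hz a)
    have h1 : (1 : R) = 0 := by
      have := (Submodule.eq_bot_iff _).mp this 1 trivial
      exact this
    exact one_ne_zero h1
  haveI : NeZero n := ⟨hn⟩
  -- the additive character
  set e : AddChar R ℂ :=
    (AddChar.zmodChar n hζ.pow_eq_one).compAddMonoidHom ψ.toAddMonoidHom with he
  have he_apply : ∀ a : R, e a = ζ ^ (ψ a).val := fun a => rfl
  have he_ne_one : ∀ a : R, ψ a ≠ 0 → e a ≠ 1 := by
    intro a ha
    rw [he_apply]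
    have hv : (ψ a).val ≠ 0 := fun h => ha ((ZMod.val_eq_zero _).mp h)
    exact hζ.pow_ne_one_of_pos_of_lt hv ((ψ a).val_lt)
  set m : Ideal R := IsLocalRing.maximalIdeal R with hm
  -- total sum is zero
  have hSR : ∑ a : R, e a = 0 := by
    apply AddChar.sum_eq_zero_iff_ne_zero.mpr
    have : ∃ a : R, ψ a ≠ 0 := by
      by_contra hh
      push_neg at hh
      have : (⊤ : Ideal R) = ⊥ := hψ ⊤ (fun a _ => hh a)
      exact one_ne_zero ((Submodule.eq_bot_iff _).mp this 1 trivial)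
    obtain ⟨a, ha⟩ := this
    exact AddChar.ne_one_iff.mpr ⟨a, he_ne_one a ha⟩
  -- split the total sum into units and the maximal ideal
  have hsplit : ∑ a : R, e a = (∑ a : Rˣ, e (a : R)) + ∑ a : m, e (a : R) := by
    rw [← Finset.sum_filter_add_sum_filter_not Finset.univ (fun a : R => IsUnit a)]
    congr 1
    · refine (Finset.sum_bij (fun (u : Rˣ) _ => (u : R)) ?_ ?_ ?_ ?_).symm
      · intro u _; simp [u.isUnit]
      · intro u _ v _ h; exact Units.ext h
      · intro b hb
        rcases (Finset.mem_filter.mp hb).2 with ⟨u, rfl⟩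
        exact ⟨u, Finset.mem_univ u, rfl⟩
      · intro u _; rfl
    · refine (Finset.sum_bij (fun (x : m) _ => (x : R)) ?_ ?_ ?_ ?_).symm
      · intro x _
        simp only [Finset.mem_filter, Finset.mem_univ, true_and]
        exact fun h => (IsLocalRing.mem_maximalIdeal _).mp x.2 h
      · intro x _ y _ h; exact Subtype.ext h
      · intro b hb
        have : b ∈ m := (IsLocalRing.mem_maximalIdeal _).mpr (Finset.mem_filter.mp hb).2
        exact ⟨⟨b, this⟩, Finset.mem_univ _, rfl⟩
      · intro x _; rfl
  constructor
  · -- not a field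
    intro hF
    have hmne : m ≠ ⊥ := fun h => hF (IsLocalRing.isField_iff_maximalIdeal_eq.mpr h)
    have hex : ∃ a : m, ψ (a : R) ≠ 0 := by
      by_contra hh
      push_neg at hh
      exact hmne (hψ m (fun a ha => hh ⟨a, ha⟩))
    obtain ⟨a, ha⟩ := hex
    have hSm : ∑ a : m, e (a : R) = 0 := by
      have : ∑ x : m, (e.compAddMonoidHom (m.subtype.toAddMonoidHom)) x = 0 := by
        apply AddChar.sum_eq_zero_iff_ne_zero.mpr
        exact AddChar.ne_one_iff.mpr ⟨a, he_ne_one _ ha⟩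
      simpa using this
    have := hsplit
    rw [hSR, hSm, add_zero] at this
    simp only [he_apply] at this
    exact this.symm
  · -- a field
    intro hF
    have hmb : m = ⊥ := IsLocalRing.isField_iff_maximalIdeal_eq.mp hF
    have hzero : ∀ x : R, x ∈ m → x = 0 := by
      intro x hx
      rw [hmb] at hx
      exact hx
    have hSm : ∑ a : m, e (a : R) = 1 := by
      have hz : ∀ a : m, e (a : R) = 1 := by
        intro a
        rw [hzero a a.2, AddChar.map_zero_eq_one]
      rw [Finset.sum_congr rfl (fun a _ => hz a), Finset.sum_const, nsmul_eq_mul, mul_one]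
      have hcard : Fintype.card m = 1 := by
        refine Fintype.card_eq_one_iff.mpr ⟨0, fun b => ?_⟩
        ext
        exact hzero b b.2
      simp [Finset.card_univ, hcard]
    have := hsplit
    rw [hSR, hSm] at this
    simp only [he_apply] at this
    exact eq_neg_of_add_eq_zero_left this.symm
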